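/- Let k ≥ 2 and let I, I' be instances over the same schema. If the Duplicator has a winning strategy in the existential k-pebble game on (I, I') witnessed by a family H of partial homomorphisms (closed under restriction and with the extension property up to domain size k), then for every instance I'' of treewidth at most k−1, a homomorphism from I'' to I implies a homomorphism from I'' to I'. -/

import Mathlib

namespace MonDet

/-- A fact over schema `σ` with arities `ar`, with elements from domain `D`. -/
abbrev RFact (σ : Type) (ar : σ → ℕ) (D : Type) := Σ R : σ, Fin (ar R) → D

/-- Domain of a partial map, represented as a function into `Option`. -/
def pdom {D D' : Type} (f : D → Option D') : Set D := {a | f a ≠ none}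

/-- `f` is a partial homomorphism from `I` to `I'`: every fact of `I` whose
elements all lie in the domain of `f` is mapped to a fact of `I'`. -/
def PartialHom {σ D D' : Type} (ar : σ → ℕ)
    (I : Set (RFact σ ar D)) (I' : Set (RFact σ ar D'))
    (f : D → Option D') : Prop :=
  ∀ (R : σ) (t : Fin (ar R) → D), (⟨R, t⟩ : RFact σ ar D) ∈ I →
    (∀ i, t i ∈ pdom f) →
    ∃ t' : Fin (ar R) → D', (∀ i, f (t i) = some (t' i)) ∧
      (⟨R, t'⟩ : RFact σ ar D') ∈ I'

/-- A tree decomposition of the instance `I`: a tree `T` with bags `bags` such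
that every fact is covered by some bag and, for each element, the set of nodes
whose bag contains it induces a connected subgraph. -/
def IsTreeDecomp {σ D ι : Type} (ar : σ → ℕ) (T : SimpleGraph ι)
    (bags : ι → Set D) (I : Set (RFact σ ar D)) : Prop :=
  T.IsTree ∧
  (∀ f ∈ I, ∃ v : ι, ∀ i, f.2 i ∈ bags v) ∧
  (∀ d : D, (T.induce {v : ι | d ∈ bags v}).Preconnected)

section Aux

open Classical in
/-- Recursion along the parent function of a rooted tree. -/
noncomputable def buildAux {ι α : Type} (rk : ι → ℕ) (r : ι) (par : ι → ι)
    (hpar : ∀ v, v ≠ r → rk (par v) < rk v)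
    (base : α) (step : ι → α → α) (v : ι) : α :=
  if h : v = r then base else step v (buildAux rk r par hpar base step (par v))
termination_by rk v
decreasing_by exact hpar v h

theorem buildAux_ne {ι α : Type} (rk : ι → ℕ) (r : ι) (par : ι → ι)
    (hpar : ∀ v, v ≠ r → rk (par v) < rk v)
    (base : α) (step : ι → α → α) (v : ι) (h : v ≠ r) :
    buildAux rk r par hpar base step v
      = step v (buildAux rk r par hpar base step (par v)) := by
  rw [buildAux]; simp [h]

theorem buildAux_r {ι α : Type} (rk : ι → ℕ) (r : ι) (par : ι → ι)
    (hpar : ∀ v, v ≠ r → rk (par v) < rk v)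
    (base : α) (step : ι → α → α) :
    buildAux rk r par hpar base step r = base := by
  rw [buildAux]; simp

section PartialMaps
open Classical
variable {D D' : Type} {k : ℕ} {H : Set (D → Option D')}

theorem restrict_mem (hres : ∀ f ∈ H, ∀ g : D → Option D', (∀ a, g a = none ∨ g a = f a) → g ∈ H)
    {f : D → Option D'} (hf : f ∈ H) (S : Set D) :
    (fun a => if a ∈ S then f a else none) ∈ H ∧
    pdom (fun a => if a ∈ S then f a else none) = S ∩ pdom f := by
  constructor
  · exact hres f hf _ (fun a => by by_cases h : a ∈ S <;> simp [h])
  · ext a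
    by_cases h : a ∈ S <;> simp [pdom, h]

theorem extend_lemma
    (hres : ∀ f ∈ H, ∀ g : D → Option D', (∀ a, g a = none ∨ g a = f a) → g ∈ H)
    (hext : ∀ f ∈ H, (pdom f).ncard < k → ∀ a : D,
      ∃ g ∈ H, (∀ b ∈ pdom f, g b = f b) ∧ a ∈ pdom g) :
    ∀ n : ℕ, ∀ f ∈ H, ∀ S : Set D, S.Finite → S.ncard ≤ k → pdom f ⊆ S →
      (S \ pdom f).ncard ≤ n →
      ∃ g ∈ H, pdom g = S ∧ ∀ a ∈ pdom f, g a = f a := by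
  intro n
  induction n with
  | zero =>
    intro f hf S hSfin _ hsub hcard
    have : S \ pdom f = ∅ := by
      rw [← Set.ncard_eq_zero hSfin.diff]
      omega
    have hSeq : pdom f = S := Set.Subset.antisymm hsub
      (fun a ha => by
        by_contra hna
        exact absurd (Set.mem_diff_of_mem ha hna) (by simp [this]))
    exact ⟨f, hf, hSeq, fun a _ => rfl⟩
  | succ n ih =>
    intro f hf S hSfin hSk hsub hcard
    by_cases hSeq : S ⊆ pdom f
    · exact ⟨f, hf, Set.Subset.antisymm hsub hSeq, fun a _ => rfl⟩
    · obtain ⟨a, haS, haf⟩ := Set.not_subset.mp hSeq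
      have hlt : (pdom f).ncard < k :=
        lt_of_lt_of_le (Set.ncard_lt_ncard ⟨hsub, fun h => haf (h haS)⟩ hSfin) hSk
      obtain ⟨g1, hg1, hag1, hadom⟩ := hext f hf hlt a
      obtain ⟨hg2, hg2dom⟩ := restrict_mem hres hg1 S
      set g2 : D → Option D' := fun a => if a ∈ S then g1 a else none with hg2def
      have hsub2 : pdom f ⊆ pdom g2 := by
        intro b hb
        rw [hg2dom]
        refine ⟨hsub hb, ?_⟩
        simp only [pdom, Set.mem_setOf_eq, hag1 b hb]
        exact hb
      have hag2 : ∀ b ∈ pdom f, g2 b = f b := fun b hb => by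
        simp only [hg2def, if_pos (hsub hb)]; exact hag1 b hb
      have hadom2 : a ∈ pdom g2 := by rw [hg2dom]; exact ⟨haS, hadom⟩
      have hdec : (S \ pdom g2).ncard ≤ n := by
        have hss : S \ pdom g2 ⊂ S \ pdom f :=
          ⟨Set.diff_subset_diff_right hsub2, fun h =>
            (h ⟨haS, haf⟩).2 hadom2⟩
        have := Set.ncard_lt_ncard hss hSfin.diff
        omega
      have hsub2' : pdom g2 ⊆ S := by rw [hg2dom]; exact Set.inter_subset_left
      obtain ⟨g, hg, hgdom, hag⟩ := ih g2 hg2 S hSfin hSk hsub2' hdec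
      exact ⟨g, hg, hgdom, fun b hb => by rw [hag b (hsub2 hb), hag2 b hb]⟩

end PartialMaps

open SimpleGraph Walk in
theorem tree_parent {ι : Type} {T : SimpleGraph ι} (hT : T.IsTree) (r : ι) :
    ∃ (rk : ι → ℕ) (par : ι → ι),
      (∀ v, v ≠ r → T.Adj (par v) v ∧ rk (par v) < rk v) ∧
      (∀ x y, T.Adj x y → (y ≠ r ∧ par y = x) ∨ (x ≠ r ∧ par x = y)) := by
  classical
  have hEU := hT.existsUnique_path
  set P : ∀ v, T.Walk r v := fun v => (hEU r v).choose with hPdef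
  have hP : ∀ v, (P v).IsPath := fun v => (hEU r v).choose_spec.1
  have hPuniq : ∀ (v : ι) (q : T.Walk r v), q.IsPath → q = P v :=
    fun v q hq => (hEU r v).choose_spec.2 q hq
  refine ⟨fun v => (P v).length, fun v => (P v).reverse.getVert 1, ?_, ?_⟩
  · intro v hvr
    dsimp only
    obtain ⟨w, hadj, q', hq⟩ := exists_eq_cons_of_ne hvr (P v).reverse
    have hpar : (P v).reverse.getVert 1 = w := by
      rw [hq, getVert_cons_succ, getVert_zero]
    have hq'p : q'.reverse.IsPath := by
      have h1 : (P v).reverse.IsPath := (hP v).reverse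
      rw [hq] at h1
      exact h1.of_cons.reverse
    have hPw : q'.reverse = P w := hPuniq w q'.reverse hq'p
    have hlen : (P v).length = q'.length + 1 := by
      have := congrArg Walk.length hq
      simpa using this
    rw [hpar]
    refine ⟨hadj.symm, ?_⟩
    rw [← hPw]
    simp [hlen]
  · intro x y hadj
    by_cases hy : y ∈ (P x).support
    · right
      have hxr : x ≠ r := by
        intro hxr0
        have hnil : (Walk.nil : T.Walk r r) = P r := hPuniq r Walk.nil IsPath.nil
        rw [hxr0] at hy hadj
        rw [← hnil] at hy
        simp only [support_nil, List.mem_singleton] at hy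
        subst hy
        exact T.loopless.irrefl _ hadj
      refine ⟨hxr, ?_⟩
      dsimp only
      have hd : ((P x).dropUntil y hy).IsPath := (hP x).dropUntil hy
      have hsingle : (Walk.cons hadj.symm Walk.nil : T.Walk y x).IsPath :=
        (Path.singleton hadj.symm).2
      have hdeq : (P x).dropUntil y hy = Walk.cons hadj.symm Walk.nil :=
        (hT.existsUnique_path y x).unique hd hsingle
      have hspec := take_spec (P x) hy
      have hlen : (P x).length = ((P x).takeUntil y hy).length + 1 := by
        conv_lhs => rw [← hspec]
        rw [length_append, hdeq]
        rfl
      have hgv := congrArg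
        (fun (w : T.Walk r x) => w.getVert ((P x).takeUntil y hy).length) hspec
      simp only [getVert_append, lt_self_iff_false, if_false, Nat.sub_self, hdeq,
        getVert_zero] at hgv
      rw [getVert_reverse, hlen]
      simp only [Nat.add_sub_cancel]
      exact hgv.symm
    · left
      have hyr : y ≠ r := by
        rintro rfl
        exact hy (P x).start_mem_support
      refine ⟨hyr, ?_⟩
      dsimp only
      have hpe : ((P x).concat hadj).reverse.IsPath := by
        rw [reverse_concat]
        rw [cons_isPath_iff]
        refine ⟨(hP x).reverse, ?_⟩
        rw [support_reverse, List.mem_reverse]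
        exact hy
      have hPy : (P x).concat hadj = P y := by
        refine hPuniq y _ ?_
        have := hpe.reverse
        rwa [reverse_reverse] at this
      rw [← hPy, reverse_concat, getVert_cons_succ, getVert_zero]

end Aux

/-- Let `k ≥ 2` and `I, I'` be instances over the same schema. If the
Duplicator has a winning strategy in the existential `k`-pebble game on `(I, I')`,
witnessed by a family `H` of partial homomorphisms (with domains of size ≤ `k`,
closed under restriction, with the extension property below size `k`), then for
every instance `I''` of treewidth at most `k − 1` (i.e. having a tree decomposition
with bags of size at most `k`), a homomorphism from `I''` to `I` implies a
homomorphism from `I''` to `I'`. -/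
theorem pebble_game_transfers_bounded_treewidth_homomorphisms
    {σ D D' D'' : Type} (ar : σ → ℕ) (k : ℕ) (hk : 2 ≤ k)
    (I : Set (RFact σ ar D)) (I' : Set (RFact σ ar D'))
    (H : Set (D → Option D')) (hne : H.Nonempty)
    (hph : ∀ f ∈ H, PartialHom ar I I' f)
    (hdom : ∀ f ∈ H, (pdom f).Finite ∧ (pdom f).ncard ≤ k)
    (hres : ∀ f ∈ H, ∀ g : D → Option D', (∀ a, g a = none ∨ g a = f a) → g ∈ H)
    (hext : ∀ f ∈ H, (pdom f).ncard < k → ∀ a : D,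
      ∃ g ∈ H, (∀ b ∈ pdom f, g b = f b) ∧ a ∈ pdom g)
    (I'' : Set (RFact σ ar D''))
    {ι : Type} (T : SimpleGraph ι) (bags : ι → Set D'')
    (htd : IsTreeDecomp ar T bags I'')
    (hbags : ∀ v, (bags v).Finite ∧ (bags v).ncard ≤ k)
    (hhom : ∃ h : D'' → D, ∀ f ∈ I'',
      (⟨f.1, h ∘ f.2⟩ : RFact σ ar D) ∈ I) :
    ∃ h : D'' → D', ∀ f ∈ I'', (⟨f.1, h ∘ f.2⟩ : RFact σ ar D') ∈ I' := by
  classical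
  obtain ⟨hT, hcover, hconn⟩ := htd
  obtain ⟨h, hh⟩ := hhom
  obtain ⟨f0, hf0⟩ := hne
  by_cases hD'' : Nonempty D''
  case neg =>
    refine ⟨fun d => ((hD'' ⟨d⟩).elim), ?_⟩
    rintro ⟨R, t⟩ hf
    obtain ⟨t', ht'1, ht'2⟩ := hph f0 hf0 R (h ∘ t) (hh ⟨R, t⟩ hf)
      (fun i => absurd ⟨t i⟩ hD'')
    have : (fun d => ((hD'' ⟨d⟩).elim : D')) ∘ t = t' :=
      funext fun i => absurd ⟨t i⟩ hD''
    rw [show (⟨R, (fun d => ((hD'' ⟨d⟩).elim : D')) ∘ t⟩ : RFact σ ar D')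
        = ⟨R, t'⟩ from by rw [this]]
    exact ht'2
  case pos =>
  obtain ⟨d0⟩ := hD''
  -- the empty partial map is in H
  have hemem : (fun _ : D => (none : Option D')) ∈ H := by
    have := (restrict_mem hres hf0 (∅ : Set D)).1
    convert this using 2
    simp
  have hedom : pdom (fun _ : D => (none : Option D')) = (∅ : Set D) := by
    ext a; simp [pdom]
  -- D' is nonempty
  obtain ⟨b0⟩ : Nonempty D' := by
    have hcard : (pdom (fun _ : D => (none : Option D'))).ncard < k := by
      rw [hedom]; simp; omega
    obtain ⟨g, _, _, hgd⟩ := hext _ hemem hcard (h d0)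
    simp only [pdom, Set.mem_setOf_eq] at hgd
    obtain ⟨b, hb⟩ := Option.ne_none_iff_exists'.mp hgd
    exact ⟨b⟩
  -- root the tree
  have hNι : Nonempty ι := hT.isConnected.nonempty
  obtain ⟨r⟩ := hNι
  obtain ⟨rk, par, hpar, hedgepar⟩ := tree_parent hT r
  have hpar' : ∀ v, v ≠ r → rk (par v) < rk v := fun v hv => (hpar v hv).2
  -- the step: given f ∈ H and a node v, produce g ∈ H with domain exactly
  -- h '' bags v, agreeing with f on the common part
  have stepex : ∀ f ∈ H, ∀ v : ι, ∃ g ∈ H, pdom g = h '' bags v ∧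
      ∀ a ∈ (h '' bags v) ∩ pdom f, g a = f a := by
    intro f hf v
    obtain ⟨hg2, hg2dom⟩ := restrict_mem hres hf (h '' bags v)
    set g2 : D → Option D' := fun a => if a ∈ h '' bags v then f a else none with hg2def
    have hfin : (h '' bags v).Finite := (hbags v).1.image h
    have hcard : (h '' bags v).ncard ≤ k :=
      le_trans (Set.ncard_image_le (hbags v).1) (hbags v).2
    have hsub : pdom g2 ⊆ h '' bags v := by rw [hg2dom]; exact Set.inter_subset_left
    obtain ⟨g, hg, hgdom, hag⟩ := extend_lemma hres hext
      ((h '' bags v \ pdom g2).ncard) g2 hg2 (h '' bags v) hfin hcard hsub le_rfl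
    refine ⟨g, hg, hgdom, ?_⟩
    intro a ha
    have ha2 : a ∈ pdom g2 := by rw [hg2dom]; exact ha
    rw [hag a ha2]
    simp only [hg2def, if_pos ha.1]
  set step : ι → (D → Option D') → (D → Option D') :=
    fun v f => if hf : f ∈ H then (stepex f hf v).choose else f with hstepdef
  have hstep : ∀ (f : D → Option D'), f ∈ H → ∀ v : ι, step v f ∈ H ∧
      pdom (step v f) = h '' bags v ∧
      ∀ a ∈ (h '' bags v) ∩ pdom f, step v f a = f a := by
    intro f hf v
    have hspec := (stepex f hf v).choose_spec
    simp only [hstepdef, dif_pos hf]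
    exact ⟨hspec.1, hspec.2.1, hspec.2.2⟩
  set base : D → Option D' := step r (fun _ => none) with hbasedef
  set F : ι → D → Option D' := buildAux rk r par hpar' base step with hFdef
  -- invariant
  have hInvAux : ∀ (n : ℕ) (v : ι), rk v ≤ n →
      F v ∈ H ∧ pdom (F v) = h '' bags v := by
    intro n
    induction n with
    | zero =>
      intro v hv
      by_cases hvr : v = r
      · have hFr : F v = base := by
          rw [hvr]; exact buildAux_r rk r par hpar' base step
        rw [hFr, hbasedef, hvr]
        exact ⟨(hstep _ hemem r).1, (hstep _ hemem r).2.1⟩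
      · exact absurd (hpar' v hvr) (by omega)
    | succ n ih =>
      intro v hv
      by_cases hvr : v = r
      · have hFr : F v = base := by
          rw [hvr]; exact buildAux_r rk r par hpar' base step
        rw [hFr, hbasedef, hvr]
        exact ⟨(hstep _ hemem r).1, (hstep _ hemem r).2.1⟩
      · have hFv : F v = step v (F (par v)) :=
          buildAux_ne rk r par hpar' base step v hvr
        have hlt := hpar' v hvr
        obtain ⟨h1, _⟩ := ih (par v) (by omega)
        rw [hFv]
        exact ⟨(hstep _ h1 v).1, (hstep _ h1 v).2.1⟩
  have hInv : ∀ v : ι, F v ∈ H ∧ pdom (F v) = h '' bags v :=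
    fun v => hInvAux (rk v) v le_rfl
  -- agreement along parent edges
  have hkey : ∀ x y : ι, y ≠ r → par y = x → ∀ d : D'',
      d ∈ bags x → d ∈ bags y → F x (h d) = F y (h d) := by
    intro x y hyr hpxy d hdx hdy
    have hFy : F y = step y (F (par y)) :=
      buildAux_ne rk r par hpar' base step y hyr
    rw [hFy, hpxy]
    refine ((hstep (F x) (hInv x).1 y).2.2 (h d) ⟨⟨d, hdy, rfl⟩, ?_⟩).symm
    rw [(hInv x).2]
    exact ⟨d, hdx, rfl⟩
  have hagree : ∀ x y : ι, T.Adj x y → ∀ d : D'',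
      d ∈ bags x → d ∈ bags y → F x (h d) = F y (h d) := by
    intro x y hadj d hdx hdy
    rcases hedgepar x y hadj with ⟨hyr, hp⟩ | ⟨hxr, hp⟩
    · exact hkey x y hyr hp d hdx hdy
    · exact (hkey y x hxr hp d hdy hdx).symm
  -- constancy over the connected set of bags containing d
  have hconst : ∀ d : D'', ∀ u v : ι, d ∈ bags u → d ∈ bags v →
      F u (h d) = F v (h d) := by
    intro d u v hu hv
    have hwalkind : ∀ (a b : {v : ι | d ∈ bags v})
        (w : (T.induce {v : ι | d ∈ bags v}).Walk a b),
        F a.1 (h d) = F b.1 (h d) := by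
      intro a b w
      induction w with
      | nil => rfl
      | cons hadj w ih =>
        rename_i x y z
        have hadj' : T.Adj x.1 y.1 := hadj
        exact (hagree x.1 y.1 hadj' d x.2 y.2).trans ih
    obtain ⟨w⟩ := hconn d ⟨u, hu⟩ ⟨v, hv⟩
    exact hwalkind ⟨u, hu⟩ ⟨v, hv⟩ w
  -- the homomorphism
  refine ⟨fun d => if hd : ∃ v, d ∈ bags v then (F hd.choose (h d)).getD b0 else b0, ?_⟩
  rintro ⟨R, t⟩ hf
  obtain ⟨v, hv⟩ := hcover ⟨R, t⟩ hf
  obtain ⟨t', ht'1, ht'2⟩ := hph (F v) (hInv v).1 R (h ∘ t) (hh ⟨R, t⟩ hf)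
    (fun i => by rw [Function.comp_apply, (hInv v).2]; exact ⟨t i, hv i, rfl⟩)
  have heq : (fun d => if hd : ∃ v, d ∈ bags v then (F hd.choose (h d)).getD b0 else b0)
      ∘ t = t' := by
    funext i
    have hd : ∃ v', t i ∈ bags v' := ⟨v, hv i⟩
    simp only [Function.comp_apply, dif_pos hd]
    rw [hconst (t i) hd.choose v hd.choose_spec (hv i)]
    have := ht'1 i
    rw [Function.comp_apply] at this
    rw [this]
    rfl
  rw [show (⟨R, (fun d => if hd : ∃ v, d ∈ bags v then (F hd.choose (h d)).getD b0 else b0)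
      ∘ t⟩ : RFact σ ar D') = ⟨R, t'⟩ from by rw [heq]]
  exact ht'2

end MonDet
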